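/- Any directed cycle in an orientation of a planar map obtained from a spanning tree T by the rule 'tree edges point away from the root; non-tree edges are oriented so that their head precedes their tail in the contour order of T' must contain the root in its interior region; equivalently, the orientation has no positive (counterclockwise, root-exterior) directed cycle. -/

import Mathlib

open Relation

/-- A rooted combinatorial planar map with `n` edges.  The darts (half-edges) are
`Fin (2*n+1)`; the root is a dangling half-edge, fixed by the edge-involution `α`.
`σ` is the counterclockwise rotation of darts around their vertex.  Vertices are the
cycles of `σ`, faces are the cycles of `σ * α`; planarity is Euler's formula
`V + F = E + 2` and connectivity says every dart is reachable from the root. -/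
structure RMap (n : ℕ) where
  σ : Equiv.Perm (Fin (2 * n + 1))
  α : Equiv.Perm (Fin (2 * n + 1))
  root : Fin (2 * n + 1)
  α_invol : ∀ d, α (α d) = d
  α_root : α root = root
  α_ne : ∀ d, d ≠ root → α d ≠ d
  connected : ∀ d, Relation.ReflTransGen (fun x y => y = σ x ∨ y = α x) root d
  planar : Nat.card (Quot σ.SameCycle) + Nat.card (Quot (σ * α).SameCycle) = n + 2

namespace Bern
open Equiv Equiv.Perm
variable {X : Type*} [Fintype X] [DecidableEq X]

lemma sc_nat (x : Equiv.Perm X) {a b : X} (h : x.SameCycle a b) : ∃ k : ℕ, (x ^ k) a = b := by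
  obtain ⟨i, hi, h⟩ := h.exists_pow_eq'
  exact ⟨i, h⟩

lemma sc_equiv (x : Equiv.Perm X) : Equivalence x.SameCycle :=
  ⟨fun a => SameCycle.refl x a, SameCycle.symm, SameCycle.trans⟩

section Merge
variable (x : Equiv.Perm X) (u v : X)

lemma merge_L2 (hne : ¬ x.SameCycle u v) : (x * Equiv.swap u v).SameCycle u v := by
  classical
  set y := x * Equiv.swap u v with hy
  have huv : u ≠ v := fun h => hne (h ▸ SameCycle.refl x u)
  have yu : y u = x v := by simp [hy, Equiv.Perm.mul_apply, Equiv.swap_apply_left]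
  have yo : ∀ a, a ≠ u → a ≠ v → y a = x a := by
    intro a h1 h2; simp [hy, Equiv.Perm.mul_apply, Equiv.swap_apply_of_ne_of_ne h1 h2]
  have hex : ∃ k, 0 < k ∧ (x ^ k) v = v := by
    refine ⟨orderOf x, ?_, by simp [pow_orderOf_eq_one]⟩
    exact orderOf_pos x
  set k := Nat.find hex with hk
  obtain ⟨hkpos, hkfix⟩ := Nat.find_spec hex
  have hmin : ∀ j, 0 < j → j < k → (x ^ j) v ≠ v := by
    intro j hj hjk hfix
    exact Nat.find_min hex hjk ⟨hj, hfix⟩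
  have key : ∀ j, j < k → (y ^ j) (x v) = (x ^ (j+1)) v := by
    intro j
    induction j with
    | zero => intro _; simp [pow_one]
    | succ j ih =>
      intro hj
      have h1 : (y ^ j) (x v) = (x ^ (j+1)) v := ih (Nat.lt_of_succ_lt hj)
      have hnu : (x ^ (j+1)) v ≠ u := by
        intro h
        exact hne (SameCycle.symm ⟨(j+1 : ℕ), by rw [zpow_natCast]; exact h⟩)
      have hnv : (x ^ (j+1)) v ≠ v := hmin (j+1) (Nat.succ_pos j) hj
      calc (y ^ (j+1)) (x v) = y ((y ^ j) (x v)) := by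
            rw [pow_succ', Equiv.Perm.mul_apply]
        _ = y ((x ^ (j+1)) v) := by rw [h1]
        _ = x ((x ^ (j+1)) v) := yo _ hnu hnv
        _ = (x ^ (j+2)) v := by rw [pow_succ' x (j+1), Equiv.Perm.mul_apply]
  have h2 : (y ^ (k-1)) (x v) = v := by
    have := key (k-1) (Nat.sub_lt hkpos Nat.one_pos)
    rw [this]
    have : k - 1 + 1 = k := Nat.succ_pred_eq_of_pos hkpos
    rw [this, hkfix]
  have s1 : y.SameCycle u (x v) := ⟨1, by simp [yu]⟩
  have s2 : y.SameCycle (x v) v := ⟨(k-1 : ℕ), by rw [zpow_natCast]; exact h2⟩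
  exact s1.trans s2

lemma merge_L1 (hne : ¬ x.SameCycle u v) {a b : X} (h : x.SameCycle a b) :
    (x * Equiv.swap u v).SameCycle a b := by
  classical
  set y := x * Equiv.swap u v with hy
  have one : ∀ c, y.SameCycle c (x c) := by
    intro c
    by_cases h1 : c = u
    · have hx : x c = y v := by rw [h1]; simp [hy, Equiv.Perm.mul_apply]
      rw [hx, h1]
      exact (merge_L2 x u v hne).apply_right
    · by_cases h2 : c = v
      · have hx : x c = y u := by rw [h2]; simp [hy, Equiv.Perm.mul_apply]
        rw [hx, h2]
        exact (merge_L2 x u v hne).symm.apply_right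
      · have hx : x c = y c := by
          simp [hy, Equiv.Perm.mul_apply, Equiv.swap_apply_of_ne_of_ne h1 h2]
        rw [hx]
        exact (SameCycle.refl y c).apply_right
  obtain ⟨k, hk⟩ := sc_nat x h
  subst hk
  clear h
  induction k with
  | zero => exact SameCycle.refl y a
  | succ k ih =>
    have : (x ^ (k+1)) a = x ((x ^ k) a) := by rw [pow_succ', Equiv.Perm.mul_apply]
    rw [this]
    exact ih.trans (one _)

/-- the merged relation -/
def Q (x : Equiv.Perm X) (u v a b : X) : Prop :=
  x.SameCycle a b ∨ (x.SameCycle a u ∧ x.SameCycle v b) ∨ (x.SameCycle a v ∧ x.SameCycle u b)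

lemma merge_L4 (hne : ¬ x.SameCycle u v) {a b : X}
    (h : (x * Equiv.swap u v).SameCycle a b) : Q x u v a b := by
  classical
  set y := x * Equiv.swap u v with hy
  have qtrans : ∀ {a b c}, Q x u v a b → Q x u v b c → Q x u v a c := by
    rintro a b c (h1 | ⟨h1, h2⟩ | ⟨h1, h2⟩) (g1 | ⟨g1, g2⟩ | ⟨g1, g2⟩)
    · exact Or.inl (h1.trans g1)
    · exact Or.inr (Or.inl ⟨h1.trans g1, g2⟩)
    · exact Or.inr (Or.inr ⟨h1.trans g1, g2⟩)
    · exact Or.inr (Or.inl ⟨h1, h2.trans g1⟩)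
    · exact absurd (h2.trans g1).symm hne
    · exact Or.inl (h1.trans g2)
    · exact Or.inr (Or.inr ⟨h1, h2.trans g1⟩)
    · exact Or.inl (h1.trans g2)
    · exact absurd (h2.trans g1) hne
  have qstep : ∀ c, Q x u v c (y c) := by
    intro c
    by_cases h1 : c = u
    · have hx : y c = x v := by rw [h1]; simp [hy, Equiv.Perm.mul_apply]
      rw [hx]
      exact Or.inr (Or.inl ⟨h1 ▸ SameCycle.refl x c, (SameCycle.refl x v).apply_right⟩)
    · by_cases h2 : c = v
      · have hx : y c = x u := by rw [h2]; simp [hy, Equiv.Perm.mul_apply]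
        rw [hx]
        exact Or.inr (Or.inr ⟨h2 ▸ SameCycle.refl x c, (SameCycle.refl x u).apply_right⟩)
      · have hx : y c = x c := by
          simp [hy, Equiv.Perm.mul_apply, Equiv.swap_apply_of_ne_of_ne h1 h2]
        rw [hx]
        exact Or.inl ((SameCycle.refl x c).apply_right)
  obtain ⟨k, hk⟩ := sc_nat y h
  subst hk
  clear h
  induction k with
  | zero => exact Or.inl (SameCycle.refl x a)
  | succ k ih =>
    have : (y ^ (k+1)) a = y ((y ^ k) a) := by rw [pow_succ', Equiv.Perm.mul_apply]
    rw [this]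
    exact qtrans ih (qstep _)


lemma quot_mk_eq_iff (x : Equiv.Perm X) (a b : X) :
    Quot.mk x.SameCycle a = Quot.mk x.SameCycle b ↔ x.SameCycle a b := by
  constructor
  · intro h
    exact ((sc_equiv x).eqvGen_iff).mp (Quot.eqvGen_exact h)
  · exact Quot.sound

lemma merge_L3 (hne : ¬ x.SameCycle u v) :
    Nat.card (Quot (x * Equiv.swap u v).SameCycle) + 1 = Nat.card (Quot x.SameCycle) := by
  classical
  set y := x * Equiv.swap u v with hy
  set f : Quot x.SameCycle → Quot y.SameCycle :=
    Quot.lift (Quot.mk y.SameCycle) (fun a b h => Quot.sound (merge_L1 x u v hne h)) with hf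
  set A : Type _ := {s : Quot x.SameCycle // s ≠ Quot.mk x.SameCycle v} with hA
  have hgbij : Function.Bijective (fun s : A => f s.1) := by
    constructor
    · rintro ⟨s, hs⟩ ⟨t, ht⟩ hst
      obtain ⟨a, rfl⟩ := Quot.exists_rep s
      obtain ⟨b, rfl⟩ := Quot.exists_rep t
      have : y.SameCycle a b := by
        rw [← quot_mk_eq_iff y a b]
        exact hst
      rcases merge_L4 x u v hne this with h | ⟨h1, h2⟩ | ⟨h1, h2⟩
      · exact Subtype.ext (Quot.sound h)
      · exact absurd ((quot_mk_eq_iff x b v).mpr h2.symm) ht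
      · exact absurd ((quot_mk_eq_iff x a v).mpr h1) hs
    · intro t
      obtain ⟨b, rfl⟩ := Quot.exists_rep t
      by_cases hb : x.SameCycle b v
      · refine ⟨⟨Quot.mk _ u, fun h => hne ((quot_mk_eq_iff x u v).mp h)⟩, ?_⟩
        show Quot.mk y.SameCycle u = Quot.mk y.SameCycle b
        exact Quot.sound ((merge_L2 x u v hne).trans (merge_L1 x u v hne hb.symm))
      · exact ⟨⟨Quot.mk _ b, fun h => hb ((quot_mk_eq_iff x b v).mp h)⟩, rfl⟩
  have h1 : Nat.card (Quot y.SameCycle) = Nat.card A := (Nat.card_eq_of_bijective _ hgbij).symm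
  have h2 : Nat.card (Quot x.SameCycle) = Nat.card A + 1 := by
    have e : Option A ≃ Quot x.SameCycle := Equiv.optionSubtypeNe (Quot.mk x.SameCycle v)
    rw [← Nat.card_congr e, Finite.card_option]
  rw [h1, h2]

end Merge

/-- The involution `α` restricted to the α-closed finset `S` (identity elsewhere). -/
def rInv (α : Equiv.Perm X) (hα : ∀ d, α (α d) = d) (S : Finset X) (hS : ∀ d ∈ S, α d ∈ S) :
    Equiv.Perm X where
  toFun d := if d ∈ S then α d else d
  invFun d := if d ∈ S then α d else d
  left_inv := by
    intro d
    by_cases h : d ∈ S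
    · simp [h, hS d h, hα]
    · simp [h]
  right_inv := by
    intro d
    by_cases h : d ∈ S
    · simp [h, hS d h, hα]
    · simp [h]

lemma rInv_apply (α : Equiv.Perm X) (hα : ∀ d, α (α d) = d) (S : Finset X)
    (hS : ∀ d ∈ S, α d ∈ S) (d : X) : rInv α hα S hS d = if d ∈ S then α d else d := rfl

theorem key (α : Equiv.Perm X) (hα : ∀ d, α (α d) = d) :
    ∀ (N : ℕ) (S : Finset X) (x : Equiv.Perm X) (r : X) (hS : ∀ d ∈ S, α d ∈ S),
    S.card = N → (∀ d ∈ S, α d ≠ d) →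
    (∀ d, Relation.ReflTransGen (fun a b => x.SameCycle a b ∨ (a ∈ S ∧ b = α a)) r d) →
    (S.card + 2 = 2 * Nat.card (Quot x.SameCycle)) →
    ∀ d, ((x * rInv α hα S hS).SameCycle r d) := by
  intro N
  induction N using Nat.strong_induction_on with
  | _ N IH =>
  intro S x r hS hcard hS' hconn hcount
  by_cases hex : ∃ d₀ ∈ S, ¬ x.SameCycle d₀ (α d₀)
  · obtain ⟨u, huS, hne⟩ := hex
    set v := α u with hv
    have hvS : v ∈ S := hS u huS
    have hvu : α u ≠ u := hS' u huS
    have huv : u ≠ v := fun h => hvu (by rw [hv] at h; exact h.symm)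
    set y := x * Equiv.swap u v with hy
    set S' := (S.erase u).erase v with hS'def
    have hmemS' : ∀ d, d ∈ S' ↔ (d ∈ S ∧ d ≠ u ∧ d ≠ v) := by
      intro d
      simp only [hS'def, Finset.mem_erase]
      tauto
    have hS'clo : ∀ d ∈ S', α d ∈ S' := by
      intro d hd
      rw [hmemS'] at hd ⊢
      refine ⟨hS d hd.1, fun h => hd.2.2 ?_, fun h => hd.2.1 ?_⟩
      · rw [← hα d, h]
      · rw [← hα d, h, hv, hα]
    have hS'ne : ∀ d ∈ S', α d ≠ d := fun d hd => hS' d ((hmemS' d).mp hd).1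
    have hveS : v ∈ S.erase u := Finset.mem_erase.mpr ⟨fun h => huv h.symm, hvS⟩
    have hcard' : S'.card = S.card - 2 := by
      have h1 : (S.erase u).card = S.card - 1 := Finset.card_erase_of_mem huS
      have h2 : S'.card = (S.erase u).card - 1 := Finset.card_erase_of_mem hveS
      omega
    have hcardS2 : 2 ≤ S.card := by
      have : ({u, v} : Finset X) ⊆ S := by
        intro d hd
        rcases Finset.mem_insert.mp hd with h | h
        · exact h ▸ huS
        · exact (Finset.mem_singleton.mp h) ▸ hvS
      have := Finset.card_le_card this
      rwa [Finset.card_insert_of_notMem (by simpa using huv), Finset.card_singleton] at this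
    have hm2 : y.SameCycle u v := by rw [hy]; exact merge_L2 x u v hne
    have hm1 : ∀ {a b : X}, x.SameCycle a b → y.SameCycle a b := by
      intro a b h; rw [hy]; exact merge_L1 x u v hne h
    have hm4 : ∀ {a b : X}, y.SameCycle a b → Q x u v a b := by
      intro a b h; rw [hy] at h; exact merge_L4 x u v hne h
    have hm3 : Nat.card (Quot y.SameCycle) + 1 = Nat.card (Quot x.SameCycle) := by
      rw [hy]; exact merge_L3 x u v hne
    have hαv : α v = u := by rw [hv]; exact hα u
    have hconn' : ∀ d, Relation.ReflTransGen
        (fun a b => y.SameCycle a b ∨ (a ∈ S' ∧ b = α a)) r d := by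
      intro d
      refine Relation.ReflTransGen.mono ?_ _ _ (hconn d)
      rintro a b (hab | ⟨haS, rfl⟩)
      · exact Or.inl (hm1 hab)
      · by_cases hau : a = u
        · subst hau
          exact Or.inl (hv ▸ hm2)
        · by_cases hav : a = v
          · subst hav
            exact Or.inl (hαv ▸ hm2.symm)
          · exact Or.inr ⟨(hmemS' a).mpr ⟨haS, hau, hav⟩, rfl⟩
    have hcount' : S'.card + 2 = 2 * Nat.card (Quot y.SameCycle) := by omega
    have hperm : x * rInv α hα S hS = y * rInv α hα S' hS'clo := by
      apply Equiv.ext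
      intro a
      rw [Equiv.Perm.mul_apply, Equiv.Perm.mul_apply, rInv_apply, rInv_apply]
      by_cases hau : a = u
      · have haS : a ∈ S := by rw [hau]; exact huS
        rw [if_pos haS, if_neg (fun h => ((hmemS' a).mp h).2.1 hau), hy]
        simp [Equiv.Perm.mul_apply, hau, ← hv]
      · by_cases hav : a = v
        · have haS : a ∈ S := by rw [hav]; exact hvS
          rw [if_pos haS, if_neg (fun h => ((hmemS' a).mp h).2.2 hav), hy]
          simp [Equiv.Perm.mul_apply, hav, hαv]
        · by_cases haS : a ∈ S
          · rw [if_pos haS, if_pos ((hmemS' a).mpr ⟨haS, hau, hav⟩), hy]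
            have h1 : α a ≠ u := fun h => hav (by rw [← hα a, h, ← hv])
            have h2 : α a ≠ v := fun h => hau (by rw [← hα a, h, hαv])
            simp [Equiv.Perm.mul_apply, Equiv.swap_apply_of_ne_of_ne h1 h2]
          · rw [if_neg haS, if_neg (fun h => haS ((hmemS' a).mp h).1), hy]
            simp [Equiv.Perm.mul_apply, Equiv.swap_apply_of_ne_of_ne hau hav]
    rw [hperm]
    exact IH (S.card - 2) (by omega) S' y r hS'clo hcard' hS'ne hconn' hcount'
  · push_neg at hex
    have hall : ∀ d, x.SameCycle r d := by
      intro d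
      induction hconn d with
      | refl => exact SameCycle.refl x r
      | tail _ hbc ih =>
        rcases hbc with h | ⟨hbS, rfl⟩
        · exact ih.trans h
        · exact ih.trans (hex _ hbS)
    have hone : Nat.card (Quot x.SameCycle) = 1 := by
      have hsub : Subsingleton (Quot x.SameCycle) := by
        constructor
        intro s t
        obtain ⟨a, rfl⟩ := Quot.exists_rep s
        obtain ⟨b, rfl⟩ := Quot.exists_rep t
        exact Quot.sound ((hall a).symm.trans (hall b))
      have hne : Nonempty (Quot x.SameCycle) := ⟨Quot.mk _ r⟩
      exact Nat.card_unique
    have hSempty : S = ∅ := Finset.card_eq_zero.mp (by omega)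
    subst hSempty
    have : x * rInv α hα ∅ (by simp) = x := by
      apply Equiv.ext
      intro a
      rw [Equiv.Perm.mul_apply, rInv_apply]
      simp
    rw [this]
    exact hall

end Bern


variable {n : ℕ}

/-- Moving along the submap with dart set `T`: rotate around a vertex, or cross an
edge of `T`. -/
def treeStep (M : RMap n) (T : Set (Fin (2 * n + 1))) (x y : Fin (2 * n + 1)) : Prop :=
  y = M.σ x ∨ (x ∈ T ∧ y = M.α x)

/-- Number of vertices of `M` (cycles of `σ`). -/
noncomputable def numVertices (M : RMap n) : ℕ := Nat.card (Quot M.σ.SameCycle)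

/-- `T` (a set of darts closed under `α`, not containing the root) is a spanning tree:
every dart is reachable from the root inside `T`, and `T` carries `V - 1` edges, i.e.
`2(V-1)` darts. -/
def IsSpanningTree (M : RMap n) (T : Set (Fin (2 * n + 1))) : Prop :=
  M.root ∉ T ∧ (∀ d ∈ T, M.α d ∈ T) ∧
  (∀ d, ReflTransGen (treeStep M T) M.root d) ∧
  Nat.card T + 2 = 2 * numVertices M

open Classical in
/-- The motion function of the tour of the spanning tree `T`: from a dart `d` at the
current corner, cross `d` if it is a tree dart and rotate, otherwise just rotate.
Iterating from the root performs the counterclockwise contour traversal of `T`. -/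
noncomputable def tour (M : RMap n) (T : Set (Fin (2 * n + 1))) (d : Fin (2 * n + 1)) :
    Fin (2 * n + 1) :=
  if d ∈ T then M.σ (M.α d) else M.σ d

/-- Position of a dart in the contour order of the tour of `T` (first time of visit). -/
noncomputable def idx (M : RMap n) (T : Set (Fin (2 * n + 1))) (d : Fin (2 * n + 1)) : ℕ :=
  sInf {k | (tour M T)^[k] M.root = d}


section TourFacts
variable {n : ℕ}

lemma tour_facts (M : RMap n) (T : Set (Fin (2 * n + 1))) (hT : IsSpanningTree M T) :
    (tour M T)^[2 * n + 1] M.root = M.root ∧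
    (∀ j k, j < 2 * n + 1 → k < 2 * n + 1 →
      (tour M T)^[j] M.root = (tour M T)^[k] M.root → j = k) ∧
    (∀ d, idx M T d < 2 * n + 1 ∧ (tour M T)^[idx M T d] M.root = d) ∧
    (∀ k, k < 2 * n + 1 → idx M T ((tour M T)^[k] M.root) = k) := by
  classical
  obtain ⟨hroot, hclo, hconn, hcount⟩ := hT
  set S : Finset (Fin (2 * n + 1)) := T.toFinite.toFinset with hSdef
  have hmem : ∀ d, d ∈ S ↔ d ∈ T := fun d => Set.Finite.mem_toFinset _
  have hSclo : ∀ d ∈ S, M.α d ∈ S := fun d hd => (hmem _).mpr (hclo d ((hmem _).mp hd))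
  have hSne : ∀ d ∈ S, M.α d ≠ d :=
    fun d hd => M.α_ne d (fun h => hroot (h ▸ ((hmem _).mp hd)))
  set τ : Equiv.Perm (Fin (2 * n + 1)) := M.σ * Bern.rInv M.α M.α_invol S hSclo with hτdef
  have hτ : ⇑τ = tour M T := by
    funext d
    rw [hτdef]
    by_cases hd : d ∈ T
    · rw [tour, if_pos hd]
      rw [Equiv.Perm.mul_apply, Bern.rInv_apply, if_pos ((hmem d).mpr hd)]
    · rw [tour, if_neg hd]
      rw [Equiv.Perm.mul_apply, Bern.rInv_apply, if_neg (fun h => hd ((hmem d).mp h))]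
  have hiter : ∀ k : ℕ, ⇑(τ ^ k) = (tour M T)^[k] := by
    intro k
    rw [Equiv.Perm.coe_pow, hτ]
  have hcount' : S.card + 2 = 2 * Nat.card (Quot M.σ.SameCycle) := by
    have h1 : Nat.card T = S.card := by
      rw [Nat.card_coe_set_eq, hSdef, Set.ncard_eq_toFinset_card T (Set.toFinite T)]
    rw [← h1]
    exact hcount
  have hconnS : ∀ d, Relation.ReflTransGen
      (fun a b => M.σ.SameCycle a b ∨ (a ∈ S ∧ b = M.α a)) M.root d := by
    intro d
    refine Relation.ReflTransGen.mono ?_ _ _ (hconn d)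
    rintro a b (hb | ⟨haT, hb⟩)
    · exact Or.inl (hb ▸ (Equiv.Perm.SameCycle.refl M.σ a).apply_right)
    · exact Or.inr ⟨(hmem a).mpr haT, hb⟩
  have hall : ∀ d, τ.SameCycle M.root d :=
    Bern.key M.α M.α_invol S.card S M.σ M.root hSclo rfl hSne hconnS hcount'
  have hsurjN : ∀ d, ∃ k : ℕ, (tour M T)^[k] M.root = d := by
    intro d
    obtain ⟨k, hk⟩ := Bern.sc_nat τ (hall d)
    exact ⟨k, by rw [← hiter]; exact hk⟩
  -- a period of the root that is at most (2 * n + 1)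
  have hpm : ∃ p, 0 < p ∧ p ≤ (2 * n + 1) ∧ (tour M T)^[p] M.root = M.root := by
    have hlt : Fintype.card (Fin (2 * n + 1)) < Fintype.card (Fin ((2 * n + 1) + 1)) := by simp
    obtain ⟨i, j, hij, hfij⟩ := Fintype.exists_ne_map_eq_of_card_lt
      (fun k : Fin ((2 * n + 1) + 1) => ((tour M T)^[(k : ℕ)] M.root : Fin (2 * n + 1))) hlt
    wlog hlt2 : (i : ℕ) < (j : ℕ) generalizing i j
    · have hne2 : (i : ℕ) ≠ (j : ℕ) := fun h => hij (Fin.ext h)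
      exact this j i hij.symm hfij.symm (by omega)
    · set p := (j : ℕ) - (i : ℕ) with hp
      set w := (tour M T)^[(i : ℕ)] M.root with hwdef
      have hper : (tour M T)^[p] w = w := by
        rw [hwdef, ← Function.iterate_add_apply]
        have h4 : p + (i : ℕ) = (j : ℕ) := by omega
        rw [h4]
        exact hfij.symm
      obtain ⟨k, hk⟩ : ∃ k : ℕ, (tour M T)^[k] w = M.root := by
        obtain ⟨k, hk⟩ := Bern.sc_nat τ ((hall w).symm)
        exact ⟨k, by rw [← hiter]; exact hk⟩
      refine ⟨p, by omega, by omega, ?_⟩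
      have h5 : (tour M T)^[p + k] w = (tour M T)^[k] w := by
        rw [Nat.add_comm p k, Function.iterate_add_apply, hper]
      calc (tour M T)^[p] M.root = (tour M T)^[p] ((tour M T)^[k] w) := by rw [hk]
        _ = (tour M T)^[p + k] w := by rw [Function.iterate_add_apply]
        _ = (tour M T)^[k] w := h5
        _ = M.root := hk
  have hfind : ∃ p, 0 < p ∧ (tour M T)^[p] M.root = M.root := by
    obtain ⟨p, h1, _, h3⟩ := hpm
    exact ⟨p, h1, h3⟩
  set p₀ := Nat.find hfind with hp₀def
  obtain ⟨hp₀pos, hp₀fix⟩ := Nat.find_spec hfind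
  have hp₀le : p₀ ≤ (2 * n + 1) := by
    obtain ⟨p, h1, h2, h3⟩ := hpm
    exact le_trans (Nat.find_min' hfind ⟨h1, h3⟩) h2
  have hmul : ∀ q, (tour M T)^[p₀ * q] M.root = M.root := by
    intro q
    induction q with
    | zero => rfl
    | succ q ih =>
      have : p₀ * (q + 1) = p₀ * q + p₀ := by ring
      rw [this, Function.iterate_add_apply, hp₀fix, ih]
  have hmod : ∀ k, (tour M T)^[k] M.root = (tour M T)^[k % p₀] M.root := by
    intro k
    conv_lhs => rw [← Nat.mod_add_div k p₀]
    rw [Function.iterate_add_apply, hmul]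
  have hsurj : ∀ d, ∃ k, k < p₀ ∧ (tour M T)^[k] M.root = d := by
    intro d
    obtain ⟨k, hk⟩ := hsurjN d
    exact ⟨k % p₀, Nat.mod_lt _ hp₀pos, by rw [← hmod]; exact hk⟩
  have hp₀ge : (2 * n + 1) ≤ p₀ := by
    have hsurj2 : Function.Surjective
        (fun k : Fin p₀ => ((tour M T)^[(k : ℕ)] M.root : Fin (2 * n + 1))) := by
      intro d
      obtain ⟨k, hk1, hk2⟩ := hsurj d
      exact ⟨⟨k, hk1⟩, hk2⟩
    have := Fintype.card_le_of_surjective _ hsurj2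
    simpa using this
  have hp₀m : p₀ = (2 * n + 1) := le_antisymm hp₀le hp₀ge
  have hinj : ∀ j k, j < (2 * n + 1) → k < (2 * n + 1) →
      (tour M T)^[j] M.root = (tour M T)^[k] M.root → j = k := by
    intro j k hj hk hjk
    by_contra hne
    wlog hlt2 : j < k generalizing j k
    · exact this k j hk hj hjk.symm (fun h => hne h.symm) (by omega)
    · have hcancel : (tour M T)^[k - j] M.root = M.root := by
        have h1 : (tour M T)^[j] ((tour M T)^[k - j] M.root) = (tour M T)^[j] M.root := by
          rw [← Function.iterate_add_apply]
          have : j + (k - j) = k := by omega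
          rw [this]
          exact hjk.symm
        have h2 : Function.Injective ((tour M T)^[j]) := by
          rw [← hτ]
          exact Function.Injective.iterate τ.injective j
        exact h2 h1
      have : ¬ (0 < k - j ∧ (tour M T)^[k - j] M.root = M.root) :=
        Nat.find_min hfind (by omega)
      exact this ⟨by omega, hcancel⟩
  have hfixgen : ∀ q : ℕ, q = p₀ → (tour M T)^[q] M.root = M.root := by
    intro q hq
    rw [hq, hp₀def]
    exact hp₀fix
  have hfixm : (tour M T)^[(2 * n + 1)] M.root = M.root := hfixgen _ hp₀m.symm
  refine ⟨hfixm, hinj, ?_, ?_⟩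
  · intro d
    obtain ⟨k, hk1, hk2⟩ := hsurj d
    have hne : {j | (tour M T)^[j] M.root = d}.Nonempty := ⟨k, hk2⟩
    have hmem2 : idx M T d ∈ {j | (tour M T)^[j] M.root = d} := Nat.sInf_mem hne
    have hle : idx M T d ≤ k := Nat.sInf_le hk2
    exact ⟨by omega, hmem2⟩
  · intro k hk
    have hne : {j | (tour M T)^[j] M.root = (tour M T)^[k] M.root}.Nonempty := ⟨k, rfl⟩
    have hmem2 := Nat.sInf_mem hne
    have hle : idx M T ((tour M T)^[k] M.root) ≤ k := Nat.sInf_le rfl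
    exact hinj _ _ (by omega) (by omega) hmem2

end TourFacts

/-- The orientation `δ(M,T)`, given as its set of head darts: a tree edge is oriented
away from the root (its tail is met before its head in the contour order), a non-tree
edge is oriented so that its head is met before its tail. -/
noncomputable def deltaH (M : RMap n) (T : Set (Fin (2 * n + 1))) : Set (Fin (2 * n + 1)) :=
  {d | d ≠ M.root ∧ ((d ∈ T ∧ idx M T (M.α d) < idx M T d) ∨
                     (d ∉ T ∧ idx M T d < idx M T (M.α d)))}

/-- `H` is an orientation: it selects exactly one dart (the head) of each edge. -/
def IsOrientation (M : RMap n) (H : Set (Fin (2 * n + 1))) : Prop :=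
  M.root ∉ H ∧ ∀ d, d ≠ M.root → (d ∈ H ↔ M.α d ∉ H)

/-- One step of a directed walk: rotate around the current vertex, or traverse an edge
from its tail to its head. -/
def dirStep (M : RMap n) (H : Set (Fin (2 * n + 1))) (x y : Fin (2 * n + 1)) : Prop :=
  y = M.σ x ∨ (M.α x ∈ H ∧ y = M.α x)

/-- A directed simple cycle: tails `t i` of consecutively incident directed edges
(`i` runs cyclically), visiting pairwise distinct vertices. -/
structure DirCycle (M : RMap n) (H : Set (Fin (2 * n + 1))) where
  k : ℕ
  hk : 0 < k
  t : ZMod k → Fin (2 * n + 1)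
  tails : ∀ i, M.α (t i) ∈ H
  chain : ∀ i, M.σ.SameCycle (M.α (t i)) (t (i + 1))
  simple : ∀ i j, M.σ.SameCycle (t i) (t j) → i = j

/-- The darts lying on the cycle. -/
def cycleDarts {M : RMap n} {H : Set (Fin (2 * n + 1))} (C : DirCycle M H) :
    Set (Fin (2 * n + 1)) :=
  {d | ∃ i, d = C.t i ∨ d = M.α (C.t i)}

/-- Darts locally on the left of the cycle: at the vertex of `t i`, the darts met
counterclockwise strictly after the outgoing tail `t i` and strictly before the
incoming head `α (t (i-1))`. -/
def leftDarts {M : RMap n} {H : Set (Fin (2 * n + 1))} (C : DirCycle M H) :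
    Set (Fin (2 * n + 1)) :=
  {d | ∃ i, ∃ m, 1 ≤ m ∧ d = (⇑M.σ)^[m] (C.t i) ∧
      ∀ m', 1 ≤ m' → m' ≤ m → (⇑M.σ)^[m'] (C.t i) ≠ M.α (C.t (i - 1))}

/-- The interior (left) region of the cycle: all darts reachable from a locally-left
dart without touching the cycle. -/
def cycInterior {M : RMap n} {H : Set (Fin (2 * n + 1))} (C : DirCycle M H) :
    Set (Fin (2 * n + 1)) :=
  {d | ∃ x ∈ leftDarts C, x ∉ cycleDarts C ∧
    ReflTransGen (fun a b => (b = M.σ a ∨ b = M.α a) ∧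
      a ∉ cycleDarts C ∧ b ∉ cycleDarts C) x d}

/-- A positive cycle is a directed cycle with the root in its exterior region. -/
def IsPositive {M : RMap n} {H : Set (Fin (2 * n + 1))} (C : DirCycle M H) : Prop :=
  M.root ∉ cycInterior C

/-- A tree-orientation: an orientation with no positive cycle in which every dart
(hence every vertex) can be reached from the root by a directed path. -/
def IsTreeOrientation (M : RMap n) (H : Set (Fin (2 * n + 1))) : Prop :=
  IsOrientation M H ∧ (∀ d, ReflTransGen (dirStep M H) M.root d) ∧
  ∀ C : DirCycle M H, ¬ IsPositive C

/-- For any tree-rooted map `(M,T)`, the orientation `δ(M,T)` (tree edges away from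
the root, non-tree edges with head before tail around `T`) is a tree-orientation:
it has no positive cycle and every vertex is reachable from the root by a directed
path. -/
theorem delta_is_tree_orientation (M : RMap n) (T : Set (Fin (2 * n + 1)))
    (hT : IsSpanningTree M T) : IsTreeOrientation M (deltaH M T) := by
  classical
  obtain ⟨hfixm, hinj, hidx, hiterate⟩ := tour_facts M T hT
  obtain ⟨hroot, hclo, hconn, hcount⟩ := hT
  set H := deltaH M T with hH
  have hrootH : M.root ∉ H := fun h => h.1 rfl
  have hαroot : ∀ d, M.α d = M.root → d = M.root := by
    intro d h
    rw [← M.α_invol d, h, M.α_root]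
  have hTiff : ∀ d, d ∈ T ↔ M.α d ∈ T :=
    fun d => ⟨hclo d, fun h => M.α_invol d ▸ hclo _ h⟩
  have hidxne : ∀ d, d ≠ M.root → idx M T d ≠ idx M T (M.α d) := by
    intro d hd heq
    apply M.α_ne d hd
    have h1 := (hidx d).2
    have h2 := (hidx (M.α d)).2
    rw [← heq] at h2
    rw [h1] at h2
    exact h2.symm
  -- Part B : orientation
  have horient : IsOrientation M H := by
    refine ⟨hrootH, ?_⟩
    intro d hd
    have hdα : M.α d ≠ M.root := fun h => hd (hαroot d h)
    have hne := hidxne d hd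
    have hαα : M.α (M.α d) = d := M.α_invol d
    constructor
    · rintro ⟨-, ⟨hdT, hlt⟩ | ⟨hdT, hlt⟩⟩ ⟨-, ⟨haT, hlt'⟩ | ⟨haT, hlt'⟩⟩
      · rw [hαα] at hlt'
        omega
      · exact haT ((hTiff d).mp hdT)
      · exact hdT ((hTiff d).mpr haT)
      · rw [hαα] at hlt'
        omega
    · intro hnot
      refine ⟨hd, ?_⟩
      by_cases hdT : d ∈ T
      · refine Or.inl ⟨hdT, ?_⟩
        rcases Nat.lt_or_ge (idx M T (M.α d)) (idx M T d) with h | h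
        · exact h
        · exfalso
          apply hnot
          refine ⟨hdα, Or.inl ⟨(hTiff d).mp hdT, ?_⟩⟩
          rw [hαα]
          omega
      · refine Or.inr ⟨hdT, ?_⟩
        rcases Nat.lt_or_ge (idx M T d) (idx M T (M.α d)) with h | h
        · exact h
        · exfalso
          apply hnot
          refine ⟨hdα, Or.inr ⟨fun h' => hdT ((hTiff d).mpr h'), ?_⟩⟩
          rw [hαα]
          omega
  -- Part C : reachability
  have hreach : ∀ d, ReflTransGen (dirStep M H) M.root d := by
    have main : ∀ k, k < 2 * n + 1 →
        ReflTransGen (dirStep M H) M.root ((tour M T)^[k] M.root) := by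
      intro k
      induction k using Nat.strong_induction_on with
      | _ k IH =>
      intro hk
      cases k with
      | zero => exact ReflTransGen.refl
      | succ k =>
        have hk' : k < 2 * n + 1 := by omega
        have hprev_reach := IH k (by omega) hk'
        have hstep : (tour M T)^[k + 1] M.root = tour M T ((tour M T)^[k] M.root) :=
          Function.iterate_succ_apply' (tour M T) k M.root
        by_cases hpT : (tour M T)^[k] M.root ∈ T
        · have hprev_ne : (tour M T)^[k] M.root ≠ M.root := fun h => hroot (h ▸ hpT)
          have hidxp : idx M T ((tour M T)^[k] M.root) = k := hiterate k hk'
          rcases Nat.lt_or_ge (idx M T (M.α ((tour M T)^[k] M.root)))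
              (idx M T ((tour M T)^[k] M.root)) with hlt | hge
          · have h2 := (hidx (M.α ((tour M T)^[k] M.root))).2
            have hra := IH (idx M T (M.α ((tour M T)^[k] M.root))) (by omega)
              (hidx (M.α ((tour M T)^[k] M.root))).1
            rw [h2] at hra
            refine hra.tail (Or.inl ?_)
            rw [hstep, tour, if_pos hpT]
          · have hlt3 : idx M T ((tour M T)^[k] M.root) <
                idx M T (M.α ((tour M T)^[k] M.root)) :=
              lt_of_le_of_ne hge (hidxne _ hprev_ne)
            have hαH : M.α ((tour M T)^[k] M.root) ∈ H := by
              refine ⟨fun h => hprev_ne (hαroot _ h), Or.inl ⟨hclo _ hpT, ?_⟩⟩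
              rw [M.α_invol]
              exact hlt3
            refine (hprev_reach.tail (Or.inr ⟨hαH, rfl⟩)).tail (Or.inl ?_)
            rw [hstep, tour, if_pos hpT]
        · refine hprev_reach.tail (Or.inl ?_)
          rw [hstep, tour, if_neg hpT]
    intro d
    have h := main (idx M T d) (hidx d).1
    rwa [(hidx d).2] at h
  -- Part D : no positive cycle
  refine ⟨horient, hreach, ?_⟩
  intro C hpos
  apply hpos
  -- basic facts about the cycle darts
  have h_t_ne_root : ∀ i, C.t i ≠ M.root := by
    intro i h
    apply hrootH
    have := C.tails i
    rwa [h, M.α_root] at this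
  have hroot_not_cyc : M.root ∉ cycleDarts C := by
    rintro ⟨i, h | h⟩
    · exact h_t_ne_root i h.symm
    · exact h_t_ne_root i (hαroot _ h.symm)
  have hcyc_α : ∀ d, d ∈ cycleDarts C → M.α d ∈ cycleDarts C := by
    rintro d ⟨i, h | h⟩
    · exact ⟨i, Or.inr (by rw [h])⟩
    · exact ⟨i, Or.inl (by rw [h, M.α_invol])⟩
  have hcyc_mem_t : ∀ i, C.t i ∈ cycleDarts C := fun i => ⟨i, Or.inl rfl⟩
  have hcyc_mem_α : ∀ i, M.α (C.t i) ∈ cycleDarts C := fun i => ⟨i, Or.inr rfl⟩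
  -- the dart of the cycle with maximal idx
  obtain ⟨e, heF, hmaxF⟩ := Finset.exists_max_image ((cycleDarts C).toFinite.toFinset)
    (idx M T) ⟨C.t 0, (Set.Finite.mem_toFinset _).mpr (hcyc_mem_t 0)⟩
  have he_cyc : e ∈ cycleDarts C := (Set.Finite.mem_toFinset _).mp heF
  have hmax : ∀ d, d ∈ cycleDarts C → idx M T d ≤ idx M T e :=
    fun d hd => hmaxF d ((Set.Finite.mem_toFinset _).mpr hd)
  have htoure_not : tour M T e ∉ cycleDarts C := by
    intro hmem
    have h1 : tour M T e = (tour M T)^[idx M T e + 1] M.root := by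
      rw [Function.iterate_succ_apply', (hidx e).2]
    by_cases hcase : idx M T e + 1 < 2 * n + 1
    · have h2 : idx M T (tour M T e) = idx M T e + 1 := by
        rw [h1]
        exact hiterate _ hcase
      have := hmax _ hmem
      omega
    · have h3 : idx M T e + 1 = 2 * n + 1 := by
        have := (hidx e).1
        omega
      apply hroot_not_cyc
      have h4 : tour M T e = M.root := by
        rw [h1, h3, hfixm]
      rwa [h4] at hmem
  -- in both cases the tour exits at σ (t i) for a suitable i
  have hkey : ∃ i, tour M T e = M.σ (C.t i) := by
    obtain ⟨i, he | he⟩ := he_cyc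
    · -- e = t i : show e ∉ T
      have heT : e ∉ T := by
        intro heT
        have hH2 : M.α e ∈ H := by rw [he]; exact C.tails i
        rcases hH2.2 with ⟨hαT, hlt⟩ | ⟨hαT, hlt⟩
        · rw [M.α_invol] at hlt
          have := hmax _ (hcyc_α e (he ▸ hcyc_mem_t i))
          omega
        · exact hαT ((hTiff e).mp heT)
      refine ⟨i, ?_⟩
      rw [tour, if_neg heT, he]
    · -- e = α (t i) : show e ∈ T
      have hαe : M.α e = C.t i := by rw [he, M.α_invol]
      have heT : e ∈ T := by
        by_contra heT
        have hH2 : M.α (C.t i) ∈ H := C.tails i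
        rw [← he] at hH2
        rcases hH2.2 with ⟨hαT, hlt⟩ | ⟨hαT, hlt⟩
        · exact heT hαT
        · rw [hαe] at hlt
          have := hmax _ (hcyc_mem_t i)
          omega
      refine ⟨i, ?_⟩
      rw [tour, if_pos heT, hαe]
  obtain ⟨i, hx⟩ := hkey
  -- x = tour M T e is a left dart not on the cycle
  have hleft : tour M T e ∈ leftDarts C := by
    refine ⟨i, 1, le_refl 1, ?_, ?_⟩
    · rw [Function.iterate_one, hx]
    · intro m' h1 h2
      have hm' : m' = 1 := by omega
      subst hm'
      rw [Function.iterate_one, ← hx]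
      intro hcon
      apply htoure_not
      rw [hcon]
      exact hcyc_mem_α (i - 1)
  -- a path from x to the root avoiding the cycle
  have hpath : ReflTransGen (fun a b => (b = M.σ a ∨ b = M.α a) ∧
      a ∉ cycleDarts C ∧ b ∉ cycleDarts C) (tour M T e) M.root := by
    have h1 : tour M T e = (tour M T)^[idx M T e + 1] M.root := by
      rw [Function.iterate_succ_apply', (hidx e).2]
    have hnot : ∀ j, idx M T e < j → j ≤ 2 * n + 1 →
        (tour M T)^[j] M.root ∉ cycleDarts C := by
      intro j hj1 hj2 hmem
      by_cases hcase : j < 2 * n + 1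
      · have h2 : idx M T ((tour M T)^[j] M.root) = j := hiterate j hcase
        have := hmax _ hmem
        omega
      · have h3 : j = 2 * n + 1 := by omega
        apply hroot_not_cyc
        rw [h3, hfixm] at hmem
        exact hmem
    have main : ∀ j, idx M T e + 1 ≤ j → j ≤ 2 * n + 1 →
        ReflTransGen (fun a b => (b = M.σ a ∨ b = M.α a) ∧
          a ∉ cycleDarts C ∧ b ∉ cycleDarts C) (tour M T e) ((tour M T)^[j] M.root) := by
      intro j
      induction j with
      | zero => intro h; omega
      | succ j IH =>
        intro hj1 hj2
        rcases Nat.lt_or_ge j (idx M T e + 1) with hcase | hcase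
        · have hj : j = idx M T e := by omega
          rw [hj, ← h1]
        · have hprev := IH hcase (by omega)
          have hstep : (tour M T)^[j + 1] M.root = tour M T ((tour M T)^[j] M.root) :=
            Function.iterate_succ_apply' (tour M T) j M.root
          have hcj : (tour M T)^[j] M.root ∉ cycleDarts C := hnot j (by omega) (by omega)
          have hcj1 : (tour M T)^[j + 1] M.root ∉ cycleDarts C := hnot (j+1) (by omega) hj2
          by_cases hpT : (tour M T)^[j] M.root ∈ T
          · have hα_not : M.α ((tour M T)^[j] M.root) ∉ cycleDarts C := by
              intro h
              apply hcj
              have := hcyc_α _ h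
              rwa [M.α_invol] at this
            refine (hprev.tail ⟨Or.inr rfl, hcj, hα_not⟩).tail ⟨Or.inl ?_, hα_not, hcj1⟩
            rw [hstep, tour, if_pos hpT]
          · refine hprev.tail ⟨Or.inl ?_, hcj, hcj1⟩
            rw [hstep, tour, if_neg hpT]
    have h5 := main (2 * n + 1) (by have := (hidx e).1; omega) (le_refl _)
    rwa [hfixm] at h5
  exact ⟨tour M T e, hleft, htoure_not, hpath⟩
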